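/- Let E be a finite-dimensional rational vector space and let σ, σ' ⊆ E be polytopes with nonempty intersection, regarded via the cones C(σ), C(σ') over {1}×σ, {1}×σ' in ℚ ⊕ E. Then the dual cones satisfy C(σ)^∨ + C(σ')^∨ = C(σ ∩ σ')^∨. -/

import Mathlib

open Set Pointwise

variable {d : ℕ}

/-- A (compact convex, nonempty) polytope in `ℚ^d`: the convex hull of a nonempty finite
set of points. -/
def IsPolytope (σ : Set (Fin d → ℚ)) : Prop :=
  ∃ s : Finset (Fin d → ℚ), s.Nonempty ∧ σ = convexHull ℚ (s : Set (Fin d → ℚ))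

/-- The cone `C(σ) ⊆ ℚ ⊕ ℚ^d` over a set `σ ⊆ ℚ^d` placed at height `1`. -/
def coneOver (σ : Set (Fin d → ℚ)) : Set (ℚ × (Fin d → ℚ)) :=
  {p | ∃ t : ℚ, 0 ≤ t ∧ ∃ x ∈ σ, p = (t, t • x)}

/-- The dual cone of a subset of `ℚ ⊕ ℚ^d`, consisting of all linear functionals that are
nonnegative on it. -/
def dualCone (C : Set (ℚ × (Fin d → ℚ))) : Set ((ℚ × (Fin d → ℚ)) →ₗ[ℚ] ℚ) :=
  {φ | ∀ p ∈ C, 0 ≤ φ p}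


section MemCone

variable {V : Type*} [AddCommGroup V] [Module ℚ V]
variable {W : Type*} [AddCommGroup W] [Module ℚ W]

/-- Membership in the cone generated by a list of vectors, defined recursively. -/
def MemCone : List V → V → Prop
  | [], x => x = 0
  | a :: l, x => ∃ t : ℚ, 0 ≤ t ∧ MemCone l (x - t • a)

theorem memCone_nonneg {l : List V} {φ : V →ₗ[ℚ] ℚ} (hφ : ∀ a ∈ l, 0 ≤ φ a) :
    ∀ {x : V}, MemCone l x → 0 ≤ φ x := by
  induction l with
  | nil => intro x hx; rw [hx]; simp
  | cons a l ih =>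
    rintro x ⟨t, ht, hx⟩
    have h1 : 0 ≤ φ (x - t • a) := ih (fun b hb => hφ b (List.mem_cons_of_mem a hb)) hx
    have h2 : 0 ≤ t * φ a := mul_nonneg ht (hφ a (List.mem_cons_self))
    have : φ x = φ (x - t • a) + t * φ a := by
      rw [map_sub, map_smul]; ring_nf
    rw [this]; positivity

theorem memCone_of_map {f : V →ₗ[ℚ] W} : ∀ {l : List V} {y : W},
    MemCone (l.map f) y → ∃ x, MemCone l x ∧ y = f x := by
  intro l
  induction l with
  | nil => intro y hy; exact ⟨0, rfl, by simpa [MemCone] using hy⟩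
  | cons a l ih =>
    rintro y ⟨t, ht, hy⟩
    obtain ⟨x, hx, hyx⟩ := ih hy
    refine ⟨x + t • a, ⟨t, ht, by simpa using hx⟩, ?_⟩
    have : y - t • f a = f x := hyx
    rw [map_add, map_smul, ← this]; abel

theorem memCone_append : ∀ {l₁ l₂ : List V} {x : V},
    MemCone (l₁ ++ l₂) x → ∃ y, MemCone l₁ y ∧ MemCone l₂ (x - y) := by
  intro l₁
  induction l₁ with
  | nil => intro l₂ x hx; exact ⟨0, rfl, by simpa using hx⟩
  | cons a l ih =>
    rintro l₂ x ⟨t, ht, hx⟩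
    obtain ⟨y, hy, hxy⟩ := ih hx
    refine ⟨y + t • a, ⟨t, ht, by simpa using hy⟩, ?_⟩
    have : x - t • a - y = x - (y + t • a) := by abel
    rwa [this] at hxy

theorem memCone_zero : ∀ {l : List V}, MemCone l 0 := by
  intro l
  induction l with
  | nil => rfl
  | cons a l ih => exact ⟨0, le_refl 0, by simpa using ih⟩

theorem memCone_add : ∀ {l : List V} {x y : V},
    MemCone l x → MemCone l y → MemCone l (x + y) := by
  intro l
  induction l with
  | nil => intro x y hx hy; rw [hx, hy]; simp [MemCone]
  | cons a l ih =>
    rintro x y ⟨t, ht, hx⟩ ⟨u, hu, hy⟩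
    refine ⟨t + u, by positivity, ?_⟩
    have : x + y - (t + u) • a = (x - t • a) + (y - u • a) := by
      rw [add_smul]; abel
    rw [this]; exact ih hx hy

theorem memCone_smul : ∀ {l : List V} {c : ℚ} {x : V},
    0 ≤ c → MemCone l x → MemCone l (c • x) := by
  intro l
  induction l with
  | nil => intro c x _ hx; rw [hx]; simp [MemCone]
  | cons a l ih =>
    rintro c x hc ⟨t, ht, hx⟩
    refine ⟨c * t, by positivity, ?_⟩
    have : c • x - (c * t) • a = c • (x - t • a) := by
      rw [smul_sub, smul_smul]
    rw [this]; exact ih hc hx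

theorem memCone_of_mem : ∀ {l : List V} {a : V}, a ∈ l → MemCone l a := by
  intro l
  induction l with
  | nil => intro a ha; simp at ha
  | cons b l ih =>
    intro a ha
    rcases List.mem_cons.mp ha with h | h
    · exact ⟨1, zero_le_one, by simp [h, memCone_zero]⟩
    · exact ⟨0, le_refl 0, by simpa using ih h⟩

theorem memCone_sum {ι : Type*} {l : List V} {t : Finset ι} {f : ι → V}
    (h : ∀ i ∈ t, MemCone l (f i)) : MemCone l (∑ i ∈ t, f i) :=
  Finset.sum_induction f (MemCone l) (fun _ _ => memCone_add) memCone_zero h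

/-- Farkas' lemma over `ℚ`: if `x` is not in the cone generated by `l`, there is a linear
functional nonnegative on `l` and negative at `x`. -/
theorem farkas : ∀ (n : ℕ) (l : List V), l.length = n → ∀ x : V, ¬ MemCone l x →
    ∃ φ : V →ₗ[ℚ] ℚ, (∀ a ∈ l, 0 ≤ φ a) ∧ φ x < 0 := by
  intro n
  induction n with
  | zero =>
    intro l hl x hx
    rw [List.length_eq_zero_iff] at hl
    subst hl
    have hx0 : x ≠ 0 := hx
    have : ¬ ∀ φ : Module.Dual ℚ V, φ x = 0 := by
      rw [Module.forall_dual_apply_eq_zero_iff]; exact hx0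
    push_neg at this
    obtain ⟨φ, hφ⟩ := this
    rcases lt_or_gt_of_ne hφ with h | h
    · exact ⟨φ, by simp, h⟩
    · exact ⟨-φ, by simp, by simpa using neg_neg_iff_pos.mpr h⟩
  | succ n ih =>
    intro l hl x hx
    match l, hl with
    | a :: l, hl =>
    have hln : l.length = n := by simpa using hl
    have hxl : ¬ MemCone l x := fun h => hx ⟨0, le_refl 0, by simpa using h⟩
    obtain ⟨φ, hφ, hφx⟩ := ih l hln x hxl
    by_cases hfa : 0 ≤ φ a
    · refine ⟨φ, ?_, hφx⟩
      intro b hb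
      rcases List.mem_cons.mp hb with h | h
      · exact h ▸ hfa
      · exact hφ b h
    · push_neg at hfa
      have hφa : φ a ≠ 0 := ne_of_lt hfa
      set π : V →ₗ[ℚ] V :=
        LinearMap.id - (φ a)⁻¹ • ((LinearMap.toSpanSingleton ℚ V a).comp φ) with hπ
      have hπ_apply : ∀ v, π v = v - ((φ a)⁻¹ * φ v) • a := by
        intro v
        simp [hπ, LinearMap.toSpanSingleton, LinearMap.smul_apply, smul_smul]
      have hπa : π a = 0 := by
        rw [hπ_apply, inv_mul_cancel₀ hφa, one_smul, sub_self]
      have hker : ∀ v, π v = 0 → v = ((φ a)⁻¹ * φ v) • a := by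
        intro v hv
        rw [hπ_apply] at hv
        exact sub_eq_zero.mp hv
      have hnot : ¬ MemCone (l.map π) (π x) := by
        intro hmem
        obtain ⟨y, hy, hxy⟩ := memCone_of_map hmem
        have h0 : π (x - y) = 0 := by rw [map_sub, ← hxy, sub_self]
        have hxy2 := hker _ h0
        set c := (φ a)⁻¹ * φ (x - y) with hc_def
        have hφy : 0 ≤ φ y := memCone_nonneg hφ hy
        have h1 : φ (x - y) < 0 := by rw [map_sub]; linarith
        have hc : 0 ≤ c :=
          le_of_lt (mul_pos_of_neg_of_neg (inv_lt_zero.mpr hfa) h1)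
        refine hx ⟨c, hc, ?_⟩
        have : x - c • a = y := by rw [← hxy2, sub_sub_cancel]
        rw [this]; exact hy
      obtain ⟨ψ, hψ, hψx⟩ := ih (l.map π) (by simpa using hln) (π x) hnot
      refine ⟨ψ.comp π, ?_, hψx⟩
      intro b hb
      rcases List.mem_cons.mp hb with h | h
      · subst h
        simp [LinearMap.comp_apply, hπa]
      · exact hψ (π b) (List.mem_map_of_mem (f := π) h)

end MemCone
section Gale

variable {V : Type*} [AddCommGroup V] [Module ℚ V]

/-- Splitting lemma ("Gale's theorem"): if `φ` is nonnegative on the intersection of the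
cones generated by `L` and `L'`, then `φ` splits as required. -/
theorem exists_split {L L' : List V} {φ : V →ₗ[ℚ] ℚ}
    (h : ∀ z, MemCone L z → MemCone L' z → 0 ≤ φ z) :
    ∃ ψ : V →ₗ[ℚ] ℚ, (∀ a ∈ L, 0 ≤ ψ a) ∧ (∀ b ∈ L', ψ b ≤ φ b) := by
  classical
  set f : V →ₗ[ℚ] V × ℚ := LinearMap.inl ℚ V ℚ with hf
  set g : V →ₗ[ℚ] V × ℚ := -(LinearMap.prod LinearMap.id φ) with hg
  set M : List (V × ℚ) := L.map f ++ L'.map g with hM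
  by_cases hmem : MemCone M ((0 : V), (1 : ℚ))
  · exfalso
    obtain ⟨y, hy1, hy2⟩ := memCone_append hmem
    obtain ⟨x₁, hx₁, hyx₁⟩ := memCone_of_map hy1
    obtain ⟨x₂, hx₂, hyx₂⟩ := memCone_of_map hy2
    have hfst : -x₁ = -x₂ := by
      have := congrArg Prod.fst hyx₂
      simp [hyx₁, hf, hg] at this ⊢
      exact this
    have hx12 : x₁ = x₂ := by simpa using hfst
    have hsnd : (1 : ℚ) = -φ x₂ := by
      have := congrArg Prod.snd hyx₂
      simpa [hyx₁, hf, hg] using this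
    have := h x₁ hx₁ (hx12 ▸ hx₂)
    rw [hx12] at this
    linarith
  · obtain ⟨Ψ, hΨ, hΨx⟩ := farkas M.length M rfl _ hmem
    set r : ℚ := Ψ ((0 : V), (1 : ℚ)) with hr
    have hrneg : r < 0 := hΨx
    have hrpos : 0 < -r := by linarith
    set ψ : V →ₗ[ℚ] ℚ := (-r)⁻¹ • (Ψ.comp (LinearMap.inl ℚ V ℚ)) with hψ
    have hψ_apply : ∀ v, ψ v = (-r)⁻¹ * Ψ (v, 0) := by
      intro v; simp [hψ, smul_eq_mul]
    have hΨdec : ∀ v s, Ψ (v, s) = Ψ (v, 0) + s * r := by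
      intro v s
      have : ((v, s) : V × ℚ) = (v, 0) + s • ((0 : V), (1 : ℚ)) := by
        simp [Prod.ext_iff]
      rw [this, map_add, map_smul, smul_eq_mul, hr]
    refine ⟨ψ, ?_, ?_⟩
    · intro a ha
      have hmemM : f a ∈ M := List.mem_append_left _ (List.mem_map_of_mem (f := f) ha)
      have h0 : 0 ≤ Ψ (a, 0) := hΨ _ hmemM
      rw [hψ_apply]
      positivity
    · intro b hb
      have hmemM : g b ∈ M := List.mem_append_right _ (List.mem_map_of_mem (f := g) hb)
      have h0 : 0 ≤ Ψ (-b, -φ b) := by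
        have : g b = (-b, -φ b) := by simp [hg]
        rw [← this]; exact hΨ _ hmemM
      have hneg : ((-b, -φ b) : V × ℚ) = -((b, φ b) : V × ℚ) := by simp
      rw [hneg, map_neg, hΨdec] at h0
      -- 0 ≤ -(Ψ (b,0) + φ b * r)
      have h1 : Ψ (b, 0) ≤ φ b * (-r) := by linarith
      rw [hψ_apply]
      calc (-r)⁻¹ * Ψ (b, 0) ≤ (-r)⁻¹ * (φ b * (-r)) := by
            exact mul_le_mul_of_nonneg_left h1 (le_of_lt (inv_pos.mpr hrpos))
        _ = φ b := by field_simp [ne_of_lt hrneg]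
end Gale

section Bridge

lemma memCone_height (l : List (Fin d → ℚ)) :
    ∀ {p : ℚ × (Fin d → ℚ)}, MemCone (l.map fun v => ((1 : ℚ), v)) p →
      p = 0 ∨ ∃ t x, 0 < t ∧ x ∈ convexHull ℚ {y | y ∈ l} ∧ p = (t, t • x) := by
  induction l with
  | nil => intro p hp; exact Or.inl hp
  | cons a l ih =>
    rintro p ⟨t, ht, hp⟩
    rcases ih hp with h0 | ⟨u, x, hu, hx, hpx⟩
    · have hpt : p = (t, t • a) := by
        have h1 : p = t • (((1 : ℚ), a) : ℚ × (Fin d → ℚ)) := by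
          have := sub_eq_zero.mp h0
          simpa using this
        rw [h1]; simp [Prod.ext_iff]
      rcases eq_or_lt_of_le ht with h | h
      · left; rw [hpt, ← h]; simp
      · right
        exact ⟨t, a, h, subset_convexHull ℚ _ (by simp), hpt⟩
    · right
      have hp2 : p = (t + u, t • a + u • x) := by
        have h1 : p = (u, u • x) + t • (((1 : ℚ), a) : ℚ × (Fin d → ℚ)) :=
          (sub_eq_iff_eq_add.mp hpx)
        rw [h1]; simp [Prod.ext_iff]; constructor
        · ring
        · abel
      have hs : 0 < t + u := by linarith
      have hsne : t + u ≠ 0 := ne_of_gt hs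
      refine ⟨t + u, (t / (t + u)) • a + (u / (t + u)) • x, hs, ?_, ?_⟩
      · have ha' : a ∈ convexHull ℚ {z | z ∈ a :: l} :=
          subset_convexHull ℚ _ (by simp)
        have hx' : x ∈ convexHull ℚ {z | z ∈ a :: l} :=
          convexHull_mono (fun z hz => List.mem_cons_of_mem a hz) hx
        exact (convex_convexHull ℚ _) ha' hx' (by positivity) (by positivity)
          (by field_simp)
      · rw [hp2, Prod.ext_iff]
        constructor
        · rfl
        · show t • a + u • x = (t + u) • ((t / (t + u)) • a + (u / (t + u)) • x)
          rw [smul_add, smul_smul, smul_smul, mul_div_cancel₀ _ hsne,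
            mul_div_cancel₀ _ hsne]

lemma coneOver_convexHull_eq (l : List (Fin d → ℚ)) (hl : l ≠ []) :
    coneOver (convexHull ℚ {y | y ∈ l}) = {p | MemCone (l.map fun v => ((1 : ℚ), v)) p} := by
  ext p
  constructor
  · rintro ⟨t, ht, x, hx, rfl⟩
    rw [convexHull_eq] at hx
    obtain ⟨ι, fs, w, z, hw0, hw1, hz, hcm⟩ := hx
    have hxsum : x = ∑ i ∈ fs, w i • z i := by
      rw [← hcm, Finset.centerMass_eq_of_sum_1 _ _ hw1]
    have heq : ((t, t • x) : ℚ × (Fin d → ℚ))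
        = ∑ i ∈ fs, (t * w i) • (((1 : ℚ), z i) : ℚ × (Fin d → ℚ)) := by
      rw [Prod.ext_iff]
      constructor
      · rw [Prod.fst_sum]
        simp only [Prod.smul_mk, smul_eq_mul, mul_one]
        rw [← Finset.mul_sum, hw1, mul_one]
      · rw [Prod.snd_sum]
        simp only [Prod.smul_mk]
        rw [hxsum, Finset.smul_sum]
        refine Finset.sum_congr rfl fun i _ => ?_
        rw [smul_smul]
    show MemCone _ _
    rw [heq]
    exact memCone_sum fun i hi => memCone_smul (mul_nonneg ht (hw0 i hi))
      (memCone_of_mem (List.mem_map_of_mem (hz i hi)))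
  · intro hp
    rcases memCone_height l hp with h0 | ⟨t, x, htpos, hx, rfl⟩
    · obtain ⟨x₀, hx₀⟩ := List.exists_mem_of_ne_nil l hl
      exact ⟨0, le_refl 0, x₀, subset_convexHull ℚ _ hx₀, by rw [h0]; simp [Prod.ext_iff]⟩
    · exact ⟨t, le_of_lt htpos, x, hx, rfl⟩

lemma mem_dual_iff (l : List (Fin d → ℚ)) (hl : l ≠ []) (φ : (ℚ × (Fin d → ℚ)) →ₗ[ℚ] ℚ) :
    φ ∈ dualCone (coneOver (convexHull ℚ {y | y ∈ l})) ↔ ∀ v ∈ l, 0 ≤ φ (1, v) := by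
  rw [coneOver_convexHull_eq l hl]
  constructor
  · intro h v hv
    exact h _ (memCone_of_mem (List.mem_map_of_mem hv))
  · intro h p hp
    refine memCone_nonneg ?_ hp
    intro a ha
    obtain ⟨v, hv, rfl⟩ := List.mem_map.mp ha
    exact h v hv

lemma coneOver_inter {σ σ' : Set (Fin d → ℚ)} (hne : (σ ∩ σ').Nonempty)
    {p : ℚ × (Fin d → ℚ)} (h1 : p ∈ coneOver σ) (h2 : p ∈ coneOver σ') :
    p ∈ coneOver (σ ∩ σ') := by
  obtain ⟨t, ht, x, hx, rfl⟩ := h1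
  obtain ⟨u, hu, y, hy, hp⟩ := h2
  obtain ⟨htu, hxy⟩ := Prod.ext_iff.mp hp
  rcases eq_or_lt_of_le ht with h | h
  · obtain ⟨x₀, hx₀⟩ := hne
    exact ⟨0, le_refl 0, x₀, hx₀, by rw [← h]; simp [Prod.ext_iff]⟩
  · have hxy2 : x = y := by
      apply smul_right_injective (Fin d → ℚ) (ne_of_gt h)
      show t • x = t • y
      simp only at hxy htu
      rw [hxy, htu]
    exact ⟨t, ht, x, ⟨hx, hxy2 ▸ hy⟩, rfl⟩

end Bridge

/-- Let `σ, σ' ⊆ ℚ^d` be polytopes with nonempty intersection, regarded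
via the cones `C(σ), C(σ')` over `{1}×σ, {1}×σ'` in `ℚ ⊕ ℚ^d`.  Then the dual cones
satisfy `C(σ)^∨ + C(σ')^∨ = C(σ ∩ σ')^∨`. -/
theorem dualCone_add_dualCone {σ σ' : Set (Fin d → ℚ)}
    (hσ : IsPolytope σ) (hσ' : IsPolytope σ') (hne : (σ ∩ σ').Nonempty) :
    dualCone (coneOver σ) + dualCone (coneOver σ') = dualCone (coneOver (σ ∩ σ')) := by
  obtain ⟨s, hsne, hσeq⟩ := hσ
  obtain ⟨s', hsne', hσeq'⟩ := hσ'
  have hσl : σ = convexHull ℚ {y | y ∈ s.toList} := by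
    rw [hσeq]; congr 1; ext y; simp
  have hσl' : σ' = convexHull ℚ {y | y ∈ s'.toList} := by
    rw [hσeq']; congr 1; ext y; simp
  have hl : s.toList ≠ [] := by
    simp only [ne_eq, Finset.toList_eq_nil]
    exact hsne.ne_empty
  have hl' : s'.toList ≠ [] := by
    simp only [ne_eq, Finset.toList_eq_nil]
    exact hsne'.ne_empty
  apply Set.Subset.antisymm
  · rintro φ ⟨φ₁, hφ₁, φ₂, hφ₂, rfl⟩
    intro p hp
    have hp1 : p ∈ coneOver σ := by
      obtain ⟨t, ht, x, hx, rfl⟩ := hp; exact ⟨t, ht, x, hx.1, rfl⟩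
    have hp2 : p ∈ coneOver σ' := by
      obtain ⟨t, ht, x, hx, rfl⟩ := hp; exact ⟨t, ht, x, hx.2, rfl⟩
    have := add_nonneg (hφ₁ p hp1) (hφ₂ p hp2)
    simpa using this
  · intro φ hφ
    have hyp : ∀ z, MemCone (s.toList.map fun v => ((1 : ℚ), v)) z →
        MemCone (s'.toList.map fun v => ((1 : ℚ), v)) z → 0 ≤ φ z := by
      intro z hz hz'
      have hz1 : z ∈ coneOver σ := by
        rw [hσl, coneOver_convexHull_eq _ hl]; exact hz
      have hz2 : z ∈ coneOver σ' := by
        rw [hσl', coneOver_convexHull_eq _ hl']; exact hz'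
      exact hφ z (coneOver_inter hne hz1 hz2)
    obtain ⟨ψ, hψ1, hψ2⟩ := exists_split hyp
    refine ⟨ψ, ?_, φ - ψ, ?_, show ψ + (φ - ψ) = φ by abel⟩
    · rw [hσl]
      refine (mem_dual_iff _ hl ψ).mpr fun v hv => ?_
      exact hψ1 _ (List.mem_map_of_mem hv)
    · rw [hσl']
      refine (mem_dual_iff _ hl' _).mpr fun v hv => ?_
      have := hψ2 _ (List.mem_map_of_mem (f := fun v => ((1 : ℚ), v)) hv)
      simp only [LinearMap.sub_apply]
      linarith
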